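/- For each m ≥ 2 let P_m ∈ ℝ[X] be a polynomial satisfying P_m·D_m = Q_m. Then P₂(2) < 0, P₃(2) > 0, and for every m ≥ 4 one has (−1)^m·P_m(2) > 0 and (−1)^{m+1}·(P_{m+1}(2) + P_m(2)) > 0. -/

import Mathlib

open Function

noncomputable section

/-- The polynomial map `f(x) = x(5-x)`. -/
def f (x : ℝ) : ℝ := x * (5 - x)

/-- `l(x) = x - 6`. -/
def lf (x : ℝ) : ℝ := x - 6

/-- `s(x) = (2-x)(4-x)(5-x) - (14-3x)`. -/
def sf (x : ℝ) : ℝ := (2 - x) * (4 - x) * (5 - x) - (14 - 3 * x)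

/-- `r(x) = -2(2-x)(5-x)`. -/
def rf (x : ℝ) : ℝ := -2 * (2 - x) * (5 - x)

/-- The decreasing inverse branch of `f`. -/
def phim (x : ℝ) : ℝ := (5 - Real.sqrt (25 - 4 * x)) / 2

/-- The increasing inverse branch of `f`. -/
def phip (x : ℝ) : ℝ := (5 + Real.sqrt (25 - 4 * x)) / 2

/-- `q m` is the function `q_m` from the paper, meaningful for `m ≥ 2`
(the values at `m = 0, 1` are junk values `1`, never used in the statements). -/
def q : ℕ → ℝ → ℝ
  | 0, _ => 1
  | 1, _ => 1
  | 2, x => sf x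
  | 3, x => sf (f x) * sf x - rf (f x) * lf x
  | m + 4, x =>
      sf (f^[m + 2] x) * q (m + 3) x - rf (f^[m + 2] x) * lf (f^[m + 1] x) * q (m + 2) x

open Polynomial

/-- The polynomial `F = 5X - X²`. -/
def F : ℝ[X] := C 5 * X - X ^ 2

/-- `Fiter i` is the `i`-fold composition `F^{(i)}`, with `Fiter 0 = X`. -/
def Fiter : ℕ → ℝ[X]
  | 0 => X
  | i + 1 => F.comp (Fiter i)

/-- Polynomial version of `l`. -/
def Lp : ℝ[X] := X - C 6

/-- Polynomial version of `s`. -/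
def Sp : ℝ[X] := (C 2 - X) * (C 4 - X) * (C 5 - X) - (C 14 - C 3 * X)

/-- Polynomial version of `r`. -/
def Rp : ℝ[X] := -C 2 * (C 2 - X) * (C 5 - X)

/-- `Qp m` is the polynomial `Q_m`, satisfying `(Qp m).eval x = q_m x`,
defined by the same recursion as `q_m`; meaningful for `m ≥ 2`. -/
def Qp : ℕ → ℝ[X]
  | 0 => 1
  | 1 => 1
  | 2 => Sp
  | 3 => Sp.comp (Fiter 1) * Sp - Rp.comp (Fiter 1) * Lp
  | m + 4 =>
      Sp.comp (Fiter (m + 2)) * Qp (m + 3) -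
        Rp.comp (Fiter (m + 2)) * Lp.comp (Fiter (m + 1)) * Qp (m + 2)

/-- `Dp m = ∏_{i=0}^{m-3} (F^{(i)} - 2)`, with `Dp 2 = 1`. -/
def Dp (m : ℕ) : ℝ[X] := ∏ i ∈ Finset.range (m - 2), (Fiter i - C 2)

/-- `r_m = 2^m + 2^{m-2} - 2`. -/
def rm (m : ℕ) : ℕ := 2 ^ m + 2 ^ (m - 2) - 2

def a (i : ℕ) : ℝ := (Fiter i).eval 2

lemma a_succ (i : ℕ) : a (i + 1) = a i * (5 - a i) := by
  simp [a, Fiter, F, eval_comp]; ring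

lemma a0 : a 0 = 2 := by simp [a, Fiter]
lemma a1 : a 1 = 6 := by rw [show (1:ℕ) = 0 + 1 from rfl, a_succ, a0]; norm_num
lemma a2 : a 2 = -6 := by rw [show (2:ℕ) = 1 + 1 from rfl, a_succ, a1]; norm_num
lemma a3 : a 3 = -66 := by rw [show (3:ℕ) = 2 + 1 from rfl, a_succ, a2]; norm_num

lemma eval_Sp (x : ℝ) : Sp.eval x = sf x := by simp [Sp, sf]
lemma eval_Rp (x : ℝ) : Rp.eval x = rf x := by simp [Rp, rf]
lemma eval_Lp (x : ℝ) : Lp.eval x = lf x := by simp [Lp, lf]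

lemma eval_dSp (x : ℝ) : (derivative Sp).eval x = -3*x^2 + 22*x - 35 := by
  simp [Sp]; ring
lemma eval_dRp (x : ℝ) : (derivative Rp).eval x = -4*x + 14 := by
  simp [Rp]; ring
lemma eval_dLp (x : ℝ) : (derivative Lp).eval x = 1 := by simp [Lp]
lemma eval_dF (x : ℝ) : (derivative F).eval x = 5 - 2*x := by simp [F]; norm_num

lemma Qp5eq (k : ℕ) : Qp (k + 5) =
    Sp.comp (Fiter (k + 3)) * Qp (k + 4) -
      Rp.comp (Fiter (k + 3)) * Lp.comp (Fiter (k + 2)) * Qp (k + 3) := rfl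

lemma Fiter_eval (i : ℕ) (x : ℝ) : (Fiter i).eval x = (Fiter i).eval x := rfl

lemma qv2 : (Qp 2).eval 2 = -8 := by
  show Sp.eval 2 = -8; rw [eval_Sp]; norm_num [sf]

lemma qv3 : (Qp 3).eval 2 = 0 := by
  show (Sp.comp (Fiter 1) * Sp - Rp.comp (Fiter 1) * Lp).eval 2 = 0
  simp only [eval_sub, eval_mul, eval_comp, eval_Sp, eval_Rp, eval_Lp]
  have h1 : (Fiter 1).eval 2 = 6 := a1
  rw [h1]; norm_num [sf, rf, lf]

lemma qv4 : (Qp 4).eval 2 = 0 := by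
  show (Sp.comp (Fiter 2) * Qp 3 - Rp.comp (Fiter 2) * Lp.comp (Fiter 1) * Qp 2).eval 2 = 0
  simp only [eval_sub, eval_mul, eval_comp, eval_Sp, eval_Rp, eval_Lp]
  rw [qv3, show (Fiter 1).eval 2 = 6 from a1]
  norm_num [lf]

lemma qv_aux : ∀ k : ℕ, (Qp (k + 3)).eval 2 = 0 ∧ (Qp (k + 4)).eval 2 = 0 := by
  intro k
  induction k with
  | zero => exact ⟨qv3, qv4⟩
  | succ n ih =>
    refine ⟨ih.2, ?_⟩
    rw [Qp5eq n]
    simp only [eval_sub, eval_mul, eval_comp]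
    rw [ih.1, ih.2]; ring

lemma qv_zero (k : ℕ) : (Qp (k + 3)).eval 2 = 0 := (qv_aux k).1

lemma Fiter1 : Fiter 1 = F := by simp [Fiter]

lemma qd3 : (derivative (Qp 3)).eval 2 = 68 := by
  show (derivative (Sp.comp (Fiter 1) * Sp - Rp.comp (Fiter 1) * Lp)).eval 2 = 68
  rw [Fiter1]
  simp only [derivative_sub, derivative_mul, derivative_comp, eval_sub, eval_add, eval_mul,
    eval_comp, eval_Sp, eval_Rp, eval_Lp, eval_dSp, eval_dRp, eval_dLp, eval_dF]
  have h : F.eval 2 = 6 := by rw [show F = Fiter 1 from Fiter1.symm]; exact a1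
  rw [h]; norm_num [sf, rf, lf]

lemma qd4 : (derivative (Qp 4)).eval 2 = 56256 := by
  show (derivative (Sp.comp (Fiter 2) * Qp 3 -
      Rp.comp (Fiter 2) * Lp.comp (Fiter 1) * Qp 2)).eval 2 = 56256
  simp only [derivative_sub, derivative_mul, derivative_comp, eval_sub, eval_add, eval_mul,
    eval_comp, eval_Sp, eval_Rp, eval_Lp, eval_dSp, eval_dRp, eval_dLp]
  rw [show (Fiter 1).eval 2 = 6 from a1, show (Fiter 2).eval 2 = -6 from a2, qv3, qd3,
    show (Qp 2).eval 2 = -8 from qv2]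
  have hd1 : (derivative (Fiter 1)).eval 2 = 1 := by rw [Fiter1, eval_dF]; norm_num
  rw [hd1]
  norm_num [sf, rf, lf]

lemma qd_rec (k : ℕ) : (derivative (Qp (k + 5))).eval 2 =
    sf (a (k + 3)) * (derivative (Qp (k + 4))).eval 2 -
      rf (a (k + 3)) * lf (a (k + 2)) * (derivative (Qp (k + 3))).eval 2 := by
  rw [Qp5eq k]
  simp only [derivative_sub, derivative_mul, derivative_comp, eval_sub, eval_add, eval_mul,
    eval_comp, eval_Sp, eval_Rp, eval_Lp]
  rw [qv_zero k, qv_zero (k + 1)]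
  unfold a
  ring

lemma a_le (k : ℕ) : a (k + 2) ≤ -6 := by
  induction k with
  | zero => rw [a2]
  | succ n ih =>
    rw [show n + 3 = (n + 2) + 1 from rfl, a_succ]
    nlinarith

lemma Dp2 : Dp 2 = 1 := by simp [Dp]
lemma Dp3 : Dp 3 = X - C 2 := by simp [Dp, Fiter]
lemma Dp_succ (k : ℕ) : Dp (k + 4) = Dp (k + 3) * (Fiter (k + 1) - C 2) := by
  show (∏ i ∈ Finset.range (k + 2), (Fiter i - C 2)) =
    (∏ i ∈ Finset.range (k + 1), (Fiter i - C 2)) * (Fiter (k + 1) - C 2)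
  exact Finset.prod_range_succ _ _

lemma dv (k : ℕ) : (Dp (k + 3)).eval 2 = 0 := by
  induction k with
  | zero => rw [Dp3]; simp
  | succ n ih => rw [Dp_succ, eval_mul, ih, zero_mul]

lemma dd3 : (derivative (Dp 3)).eval 2 = 1 := by rw [Dp3]; simp

lemma dd_succ (k : ℕ) : (derivative (Dp (k + 4))).eval 2 =
    (derivative (Dp (k + 3))).eval 2 * (a (k + 1) - 2) := by
  rw [Dp_succ, derivative_mul, eval_add, eval_mul, eval_mul, dv k, zero_mul, add_zero,
    eval_sub, eval_C]
  rfl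

lemma dd4 : (derivative (Dp 4)).eval 2 = 4 := by
  rw [show (4:ℕ) = 0 + 4 from rfl, dd_succ, dd3, a1]; norm_num

lemma dd_sign : ∀ k : ℕ, 0 < (-1 : ℝ) ^ (k + 4) * (derivative (Dp (k + 4))).eval 2 := by
  intro k
  induction k with
  | zero => rw [dd4]; norm_num
  | succ n ih =>
    have hs := dd_succ (n + 1)
    have ha := a_le n
    have hpow : (-1 : ℝ) ^ (n + 1 + 4) = -(-1 : ℝ) ^ (n + 4) := by ring
    rw [hs, hpow]
    nlinarith

lemma qd5 : (derivative (Qp 5)).eval 2 = 18992472192 := by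
  rw [show (5:ℕ) = 0 + 5 from rfl, qd_rec 0, qd4, qd3, a2, a3]
  norm_num [sf, rf, lf]

lemma key (b : ℝ) (hb : b ≤ -6) :
    0 < sf ((b * (5 - b)) * (5 - b * (5 - b))) - 2 + b * (5 - b) ∧
    rf ((b * (5 - b)) * (5 - b * (5 - b))) * lf (b * (5 - b)) ≤
      (sf ((b * (5 - b)) * (5 - b * (5 - b))) - 2 + b * (5 - b)) * (2 - b) := by
  obtain ⟨t, ht, rfl⟩ : ∃ t : ℝ, 0 ≤ t ∧ b = -6 - t := ⟨-6 - b, by linarith, by ring⟩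
  constructor
  · simp only [sf]
    nlinarith [pow_nonneg ht 2, pow_nonneg ht 3, pow_nonneg ht 4, pow_nonneg ht 5,
      pow_nonneg ht 6, pow_nonneg ht 7, pow_nonneg ht 8, pow_nonneg ht 9,
      pow_nonneg ht 10, pow_nonneg ht 11, pow_nonneg ht 12, ht]
  · simp only [sf, rf, lf]
    nlinarith [pow_nonneg ht 2, pow_nonneg ht 3, pow_nonneg ht 4, pow_nonneg ht 5,
      pow_nonneg ht 6, pow_nonneg ht 7, pow_nonneg ht 8, pow_nonneg ht 9,
      pow_nonneg ht 10, pow_nonneg ht 11, pow_nonneg ht 12, pow_nonneg ht 13, ht]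

lemma G : ∀ k : ℕ, 0 < (derivative (Qp (k + 4))).eval 2 ∧
    (2 - a (k + 2)) * (derivative (Qp (k + 4))).eval 2 < (derivative (Qp (k + 5))).eval 2 := by
  intro k
  induction k with
  | zero => rw [qd4, qd5, a2]; norm_num
  | succ n ih =>
    obtain ⟨h1, h2⟩ := ih
    have hb : a (n + 2) ≤ -6 := a_le n
    have hpos5 : 0 < (derivative (Qp (n + 5))).eval 2 := by nlinarith
    refine ⟨hpos5, ?_⟩
    have hrec := qd_rec (n + 1)
    have hu : a (n + 3) = a (n + 2) * (5 - a (n + 2)) := a_succ (n + 2)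
    have hv : a (n + 4) = (a (n + 2) * (5 - a (n + 2))) * (5 - a (n + 2) * (5 - a (n + 2))) := by
      rw [a_succ (n + 3), hu]
    obtain ⟨hk1, hk2⟩ := key (a (n + 2)) hb
    rw [hu, hv] at hrec
    rw [hu]
    nlinarith [mul_lt_mul_of_pos_left h2 hk1,
      mul_le_mul_of_nonneg_right hk2 (le_of_lt h1)]

lemma signPos15 {e x d qq : ℝ} (he : e * e = 1) (h : x * d = qq)
    (hq : 0 < qq) (hd : 0 < e * d) : 0 < e * x := by
  rcases le_or_gt (e * x) 0 with hle | h'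
  · exfalso
    have h1 : (e * x) * (e * d) ≤ 0 := mul_nonpos_of_nonpos_of_nonneg hle hd.le
    have h2 : (e * x) * (e * d) = qq := by
      calc (e * x) * (e * d) = (e * e) * (x * d) := by ring
        _ = qq := by rw [he, h, one_mul]
    linarith
  · exact h'

theorem statement_15 (P : ℕ → ℝ[X]) (hP : ∀ m : ℕ, 2 ≤ m → P m * Dp m = Qp m) :
    (P 2).eval 2 < 0 ∧ 0 < (P 3).eval 2 ∧
    ∀ m : ℕ, 4 ≤ m →
      0 < (-1 : ℝ) ^ m * (P m).eval 2 ∧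
      0 < (-1 : ℝ) ^ (m + 1) * ((P (m + 1)).eval 2 + (P m).eval 2) := by
  have hPd : ∀ k : ℕ, (P (k + 3)).eval 2 * (derivative (Dp (k + 3))).eval 2 =
      (derivative (Qp (k + 3))).eval 2 := by
    intro k
    have h := congrArg (fun p : ℝ[X] => (derivative p).eval 2) (hP (k + 3) (by omega))
    simp only [derivative_mul, eval_add, eval_mul] at h
    rw [dv k, mul_zero, zero_add] at h
    exact h
  refine ⟨?_, ?_, ?_⟩
  · have h := hP 2 le_rfl
    rw [Dp2, mul_one] at h
    have h2 := congrArg (fun p : ℝ[X] => p.eval 2) h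
    rw [h2, qv2]; norm_num
  · have h := hPd 0
    rw [dd3, mul_one, qd3] at h
    rw [h]; norm_num
  · intro m hm
    obtain ⟨k, rfl⟩ : ∃ k, m = k + 4 := ⟨m - 4, by omega⟩
    have hq4 := (G k).1
    have h2 := (G k).2
    have hd4 := dd_sign k
    have hd5 : 0 < (-1 : ℝ) ^ (k + 5) * (derivative (Dp (k + 5))).eval 2 := dd_sign (k + 1)
    have hp4 : (P (k + 4)).eval 2 * (derivative (Dp (k + 4))).eval 2 =
        (derivative (Qp (k + 4))).eval 2 := hPd (k + 1)
    have hp5 : (P (k + 5)).eval 2 * (derivative (Dp (k + 5))).eval 2 =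
        (derivative (Qp (k + 5))).eval 2 := hPd (k + 2)
    have he4 : (-1 : ℝ) ^ (k + 4) * (-1 : ℝ) ^ (k + 4) = 1 := by
      rw [← mul_pow]; norm_num
    have he5 : (-1 : ℝ) ^ (k + 5) * (-1 : ℝ) ^ (k + 5) = 1 := by
      rw [← mul_pow]; norm_num
    have hdd : (derivative (Dp (k + 5))).eval 2 =
        (derivative (Dp (k + 4))).eval 2 * (a (k + 2) - 2) := dd_succ (k + 1)
    constructor
    · exact signPos15 he4 hp4 hq4 hd4
    · show 0 < (-1 : ℝ) ^ (k + 5) * ((P (k + 5)).eval 2 + (P (k + 4)).eval 2)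
      have hsum : ((P (k + 5)).eval 2 + (P (k + 4)).eval 2) * (derivative (Dp (k + 5))).eval 2 =
          (derivative (Qp (k + 5))).eval 2 +
            (derivative (Qp (k + 4))).eval 2 * (a (k + 2) - 2) := by
        linear_combination hp5 + (a (k + 2) - 2) * hp4 + (P (k + 4)).eval 2 * hdd
      have hq : 0 < (derivative (Qp (k + 5))).eval 2 +
          (derivative (Qp (k + 4))).eval 2 * (a (k + 2) - 2) := by nlinarith [h2]
      exact signPos15 he5 hsum hq hd5
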